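/- arXiv:2012.13132 — 9 statements merged into one kernel-verified Lean document; each statement's English description precedes it below -/
import Mathlib

section
/- For any image g : P → ℝ≥0 on a pixel set P in an abelian group M, any finite structuring element B with 0 ∈ B, and any threshold t ≥ 0, erosion commutes with thresholding: ε_B(τ_t(g)) = τ_t(ε_B(g)), where τ_t(g)(x) = 0 if g(x) ≤ t and 1 otherwise. -/
open scoped NNReal

variable {M : Type*} [AddCommGroup M]

/-- Erosion of an image `g` on pixel set `P` via structuring element `B`. -/
noncomputable def mErosion (P : Set M) (B : Finset M) (g : M → ℝ≥0) : M → ℝ≥0 :=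
  fun x => sInf {y | ∃ b ∈ B, x + b ∈ P ∧ g (x + b) = y}

/-- Dilation of an image `g` on pixel set `P` via structuring element `B`. -/
noncomputable def mDilation (P : Set M) (B : Finset M) (g : M → ℝ≥0) : M → ℝ≥0 :=
  fun x => sSup {y | ∃ b ∈ B, x - b ∈ P ∧ g (x - b) = y}

/-- Morphological opening. -/
noncomputable def mOpening (P : Set M) (B : Finset M) (g : M → ℝ≥0) : M → ℝ≥0 :=
  mDilation P B (mErosion P B g)

/-- Morphological closing. -/
noncomputable def mClosing (P : Set M) (B : Finset M) (g : M → ℝ≥0) : M → ℝ≥0 :=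
  mErosion P B (mDilation P B g)

/-- Thresholding operator `τ_t`. -/
noncomputable def mThreshold (t : ℝ≥0) (g : M → ℝ≥0) : M → ℝ≥0 :=
  fun x => if g x ≤ t then 0 else 1

/-- Positive shift inclusion condition `B₁ ⊆_{S,P,+} B₂` (without the subset requirement). -/
def shiftPos (P : Set M) (B₁ B₂ : Finset M) : Prop :=
  ∀ x ∈ P, ∀ b₂ ∈ B₂, x + b₂ ∈ P →
    ∃ b₁ ∈ B₁, x + b₁ ∈ P ∧ ∀ b ∈ B₁, b + (b₂ - b₁) ∈ B₂

/-- Negative shift inclusion condition `B₁ ⊆_{S,P,−} B₂` (without the subset requirement). -/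
def shiftNeg (P : Set M) (B₁ B₂ : Finset M) : Prop :=
  ∀ x ∈ P, ∀ b₂ ∈ B₂, x - b₂ ∈ P →
    ∃ b₁ ∈ B₁, x - b₁ ∈ P ∧ ∀ b ∈ B₁, b + (b₂ - b₁) ∈ B₂
/-- Erosion commutes with thresholding. -/
theorem erosion_comm_threshold (P : Set M) (B : Finset M) (h0 : (0 : M) ∈ B)
    (g : M → ℝ≥0) (t : ℝ≥0) :
    ∀ x ∈ P, mErosion P B (mThreshold t g) x = mThreshold t (mErosion P B g) x := by

  intro x hx
  classical
  set S : Set ℝ≥0 := {y | ∃ b ∈ B, x + b ∈ P ∧ g (x + b) = y} with hS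
  set S' : Set ℝ≥0 := {y | ∃ b ∈ B, x + b ∈ P ∧ mThreshold t g (x + b) = y} with hS'
  have hSne : S.Nonempty := ⟨g x, 0, h0, by simpa using hx, by simp⟩
  have hSfin : S.Finite := by
    apply Set.Finite.subset (Set.Finite.image (fun b => g (x + b)) B.finite_toSet)
    rintro y ⟨b, hb, _, rfl⟩
    exact ⟨b, hb, rfl⟩
  have hmem : sInf S ∈ S := hSne.csInf_mem hSfin
  show sInf S' = if sInf S ≤ t then 0 else 1
  by_cases h : sInf S ≤ t
  · simp only [if_pos h]
    obtain ⟨b, hb, hbP, hbg⟩ := hmem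
    have h0' : (0 : ℝ≥0) ∈ S' := ⟨b, hb, hbP, by simp [mThreshold, hbg, h]⟩
    exact le_antisymm (csInf_le (OrderBot.bddBelow _) h0') zero_le
  · simp only [if_neg h]
    have hsub : S' = {1} := by
      apply Set.eq_singleton_iff_nonempty_unique_mem.2
      constructor
      · exact ⟨mThreshold t g (x + 0), 0, h0, by simpa using hx, rfl⟩
      · rintro y ⟨b, hb, hbP, rfl⟩
        have hmem' : g (x + b) ∈ S := ⟨b, hb, hbP, rfl⟩
        have : ¬ g (x + b) ≤ t := fun hle =>
          h (le_trans (csInf_le (OrderBot.bddBelow _) hmem') hle)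
        simp [mThreshold, this]
    rw [hsub, csInf_singleton]
end

section
/- Let P and R₁ be rectangles in ℤ^m (products of integer intervals) with 0 ∈ R₁, and let e_i be a standard basis vector. Then R₁ is shift included with respect to P in R₁ ∪ (R₁ + e_i), and also in R₁ ∪ (R₁ − e_i). -/
/-- A rectangle in `ℤ^m`: a product of integer intervals. -/
def IsRect {m : ℕ} (S : Set (Fin m → ℤ)) : Prop :=
  ∃ a b : Fin m → ℤ, (∀ i, a i ≤ b i) ∧ S = {x | ∀ i, a i ≤ x i ∧ x i ≤ b i}

/-- Shift inclusion `B₁ ⊆_{S,P} B₂` for subsets of `ℤ^m`. -/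
def shiftInclS {m : ℕ} (P B₁ B₂ : Set (Fin m → ℤ)) : Prop :=
  B₁ ⊆ B₂ ∧
  (∀ x ∈ P, ∀ b₂ ∈ B₂, x + b₂ ∈ P →
    ∃ b₁ ∈ B₁, x + b₁ ∈ P ∧ ∀ b ∈ B₁, b + (b₂ - b₁) ∈ B₂) ∧
  (∀ x ∈ P, ∀ b₂ ∈ B₂, x - b₂ ∈ P →
    ∃ b₁ ∈ B₁, x - b₁ ∈ P ∧ ∀ b ∈ B₁, b + (b₂ - b₁) ∈ B₂)

lemma rect_shift_helper {m : ℕ} (a b c d : Fin m → ℤ)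
    (ha : ∀ j, a j ≤ 0) (hb : ∀ j, 0 ≤ b j) (i : Fin m) (ε : ℤ) (hε : ε = 1 ∨ ε = -1) :
    shiftInclS {x | ∀ j, c j ≤ x j ∧ x j ≤ d j}
      {x : Fin m → ℤ | ∀ j, a j ≤ x j ∧ x j ≤ b j}
      ({x : Fin m → ℤ | ∀ j, a j ≤ x j ∧ x j ≤ b j} ∪
        (· + fun j => if j = i then ε else 0) '' {x | ∀ j, a j ≤ x j ∧ x j ≤ b j}) := by
  set v : Fin m → ℤ := fun j => if j = i then ε else 0 with hv
  refine ⟨Set.subset_union_left, ?_, ?_⟩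
  · intro x hx b₂ hb₂ hxb
    rcases hb₂ with hb₂ | ⟨r, hr, rfl⟩
    · exact ⟨b₂, hb₂, hxb, fun b hb => by simpa using Or.inl hb⟩
    · by_cases hcase : (r + v) ∈ {x : Fin m → ℤ | ∀ j, a j ≤ x j ∧ x j ≤ b j}
      · exact ⟨r + v, hcase, hxb, fun b hb => by simpa using Or.inl hb⟩
      · refine ⟨r, hr, ?_, fun b hb => Or.inr ⟨b, hb, by rw [add_sub_cancel_left]⟩⟩
        intro j
        have h1 := hxb j
        have h2 := hx j
        have h3 := hr j
        simp only [Set.mem_setOf_eq, Pi.add_apply] at h1 h2 h3 ⊢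
        by_cases hji : j = i
        · subst hji
          have h4 : ¬ (a j ≤ r j + ε ∧ r j + ε ≤ b j) := by
            intro hc
            apply hcase
            intro k
            by_cases hki : k = j
            · subst hki; simpa [hv] using hc
            · simpa [hv, hki] using hr k
          have h5 := ha j
          have h6 := hb j
          simp only [hv, if_pos rfl] at h1
          rcases hε with rfl | rfl <;> omega
        · simp only [hv, if_neg hji, add_zero] at h1
          exact h1
  · intro x hx b₂ hb₂ hxb
    rcases hb₂ with hb₂ | ⟨r, hr, rfl⟩
    · exact ⟨b₂, hb₂, hxb, fun b hb => by simpa using Or.inl hb⟩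
    · by_cases hcase : (r + v) ∈ {x : Fin m → ℤ | ∀ j, a j ≤ x j ∧ x j ≤ b j}
      · exact ⟨r + v, hcase, hxb, fun b hb => by simpa using Or.inl hb⟩
      · refine ⟨r, hr, ?_, fun b hb => Or.inr ⟨b, hb, by rw [add_sub_cancel_left]⟩⟩
        intro j
        have h1 := hxb j
        have h2 := hx j
        have h3 := hr j
        simp only [Set.mem_setOf_eq, Pi.sub_apply, Pi.add_apply] at h1 h2 h3 ⊢
        by_cases hji : j = i
        · subst hji
          have h4 : ¬ (a j ≤ r j + ε ∧ r j + ε ≤ b j) := by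
            intro hc
            apply hcase
            intro k
            by_cases hki : k = j
            · subst hki; simpa [hv] using hc
            · simpa [hv, hki] using hr k
          have h5 := ha j
          have h6 := hb j
          simp only [hv, if_pos rfl] at h1
          rcases hε with rfl | rfl <;> omega
        · simp only [hv, if_neg hji, add_zero] at h1
          exact h1

/-- One-step shifting lemma for rectangles. -/
theorem rect_shiftIncl_one_step {m : ℕ} (P R₁ : Set (Fin m → ℤ))
    (hP : IsRect P) (hR : IsRect R₁) (h0 : (0 : Fin m → ℤ) ∈ R₁) (i : Fin m) :
    shiftInclS P R₁ (R₁ ∪ (· + Pi.single i 1) '' R₁) ∧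
    shiftInclS P R₁ (R₁ ∪ (· - Pi.single i 1) '' R₁) := by
  obtain ⟨a, b, -, rfl⟩ := hR
  obtain ⟨c, d, -, rfl⟩ := hP
  have ha : ∀ j, a j ≤ 0 := fun j => (h0 j).1
  have hb : ∀ j, 0 ≤ b j := fun j => (h0 j).2
  have e1 : (· + Pi.single i 1) = (· + fun j => if j = i then (1 : ℤ) else 0) := by
    funext x
    funext j
    by_cases h : j = i <;> simp [Pi.single_apply, h]
  have e2 : (· - Pi.single i 1) = (· + fun j => if j = i then (-1 : ℤ) else 0) := by
    funext x
    funext j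
    by_cases h : j = i <;> simp [Pi.single_apply, h, sub_eq_add_neg]
  constructor
  · rw [e1]
    exact rect_shift_helper a b c d ha hb i 1 (Or.inl rfl)
  · rw [e2]
    exact rect_shift_helper a b c d ha hb i (-1) (Or.inr rfl)
end

section
/- Let P ⊆ ℤ^m be a rectangle. If R₁ ⊆ R₂ are rectangles in ℤ^m with 0 ∈ R₁, then R₁ ⊆_{S,P} R₂ (R₁ is shift included in R₂ with respect to P). -/
/-- Nested rectangles containing the origin are shift included w.r.t. a rectangular domain. -/
theorem rect_shiftIncl {m : ℕ} (P R₁ R₂ : Set (Fin m → ℤ))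
    (hP : IsRect P) (hR1 : IsRect R₁) (hR2 : IsRect R₂)
    (h0 : (0 : Fin m → ℤ) ∈ R₁) (hsub : R₁ ⊆ R₂) :
    shiftInclS P R₁ R₂ := by
  obtain ⟨p, q, hpq, rfl⟩ := hP
  obtain ⟨a, b, hab, rfl⟩ := hR1
  obtain ⟨c, d, hcd, rfl⟩ := hR2
  have h0' : ∀ i, a i ≤ 0 ∧ 0 ≤ b i := h0
  have hca : ∀ i, c i ≤ a i ∧ b i ≤ d i := by
    intro i
    have ha := hsub (show (a : Fin m → ℤ) ∈ {x | ∀ i, a i ≤ x i ∧ x i ≤ b i} from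
      fun j => ⟨le_rfl, hab j⟩) i
    have hb := hsub (show (b : Fin m → ℤ) ∈ {x | ∀ i, a i ≤ x i ∧ x i ≤ b i} from
      fun j => ⟨hab j, le_rfl⟩) i
    exact ⟨ha.1, hb.2⟩
  refine ⟨hsub, ?_, ?_⟩
  · intro x hx b₂ hb₂ hxb₂
    refine ⟨fun i => max (a i) (min (b i) (b₂ i)), ?_, ?_, ?_⟩
    · intro i
      have := hab i
      dsimp only
      constructor <;> omega
    · intro i
      have h1 := hx i
      have h2 := hxb₂ i
      have h3 := h0' i
      have h4 := hab i
      simp only [Pi.add_apply] at h2 ⊢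
      omega
    · intro e he i
      have h1 := he i
      have h2 := hb₂ i
      have h3 := hca i
      have h4 := hab i
      simp only [Pi.add_apply, Pi.sub_apply]
      omega
  · intro x hx b₂ hb₂ hxb₂
    refine ⟨fun i => max (a i) (min (b i) (b₂ i)), ?_, ?_, ?_⟩
    · intro i
      have := hab i
      dsimp only
      constructor <;> omega
    · intro i
      have h1 := hx i
      have h2 := hxb₂ i
      have h3 := h0' i
      have h4 := hab i
      simp only [Pi.sub_apply] at h2 ⊢
      omega
    · intro e he i
      have h1 := he i
      have h2 := hb₂ i
      have h3 := hca i
      have h4 := hab i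
      simp only [Pi.add_apply, Pi.sub_apply]
      omega
end

section
/- Let P ⊆ ℤ^m be a rectangle and let Q_ω = { x ∈ ℤ^m : ‖x‖₁ ≤ ω } be the L¹-ball of radius ω. Then for every nonnegative integer ω, Q_ω ⊆_{S,P} Q_{ω+1}. -/
lemma l1ball_aux {m : ℕ} (a c : Fin m → ℤ) (ω : ℕ) (x b₂ : Fin m → ℤ)
    (hx : ∀ i, a i ≤ x i ∧ x i ≤ c i)
    (hb₂ : (∑ i, |b₂ i|) ≤ (ω : ℤ) + 1)
    (hxb : ∀ i, a i ≤ x i + b₂ i ∧ x i + b₂ i ≤ c i) :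
    ∃ b₁ : Fin m → ℤ, (∑ i, |b₁ i|) ≤ (ω : ℤ) ∧
      (∀ i, a i ≤ x i + b₁ i ∧ x i + b₁ i ≤ c i) ∧
      (∑ i, |b₂ i - b₁ i|) ≤ 1 := by
  by_cases hle : (∑ i, |b₂ i|) ≤ (ω : ℤ)
  · exact ⟨b₂, hle, hxb, by simp⟩
  · -- some coordinate is nonzero
    have hpos : 1 ≤ ∑ i, |b₂ i| := by omega
    have hj : ∃ j, b₂ j ≠ 0 := by
      by_contra h
      push_neg at h
      simp [h] at hpos
    obtain ⟨j, hj⟩ := hj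
    set s : ℤ := Int.sign (b₂ j) with hs
    have hscase : (0 < b₂ j ∧ s = 1) ∨ (b₂ j < 0 ∧ s = -1) := by
      rcases hj.lt_or_gt with h | h
      · exact Or.inr ⟨h, by rw [hs, Int.sign_eq_neg_one_of_neg h]⟩
      · exact Or.inl ⟨h, by rw [hs, Int.sign_eq_one_of_pos h]⟩
    set b₁ : Fin m → ℤ := Function.update b₂ j (b₂ j - s) with hb₁
    have hb₁j : b₁ j = b₂ j - s := Function.update_self _ _ _
    have hb₁i : ∀ i, i ≠ j → b₁ i = b₂ i := fun i hi => Function.update_of_ne hi _ _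
    have habs : |b₁ j| = |b₂ j| - 1 := by
      rw [hb₁j]
      rcases hscase with ⟨h, hs1⟩ | ⟨h, hs1⟩ <;> rw [hs1] <;>
        rcases abs_cases (b₂ j) with ⟨h1, h2⟩ | ⟨h1, h2⟩ <;>
        rcases abs_cases (b₂ j - (1:ℤ)) with ⟨h3, h4⟩ | ⟨h3, h4⟩ <;>
        rcases abs_cases (b₂ j - (-1:ℤ)) with ⟨h5, h6⟩ | ⟨h5, h6⟩ <;> omega
    have herase : ∑ i ∈ Finset.univ.erase j, |b₁ i| = ∑ i ∈ Finset.univ.erase j, |b₂ i| :=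
      Finset.sum_congr rfl fun i hi => by rw [hb₁i i (Finset.ne_of_mem_erase hi)]
    have h1 : ∑ i, |b₂ i| = |b₂ j| + ∑ i ∈ Finset.univ.erase j, |b₂ i| :=
      (Finset.add_sum_erase _ _ (Finset.mem_univ j)).symm
    have h2 : ∑ i, |b₁ i| = |b₁ j| + ∑ i ∈ Finset.univ.erase j, |b₁ i| :=
      (Finset.add_sum_erase _ _ (Finset.mem_univ j)).symm
    have hsum : ∑ i, |b₁ i| ≤ (ω : ℤ) := by omega
    have hdiff : ∑ i, |b₂ i - b₁ i| ≤ 1 := by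
      have h3 : ∑ i, |b₂ i - b₁ i|
          = |b₂ j - b₁ j| + ∑ i ∈ Finset.univ.erase j, |b₂ i - b₁ i| :=
        (Finset.add_sum_erase _ _ (Finset.mem_univ j)).symm
      have h4 : ∑ i ∈ Finset.univ.erase j, |b₂ i - b₁ i| = 0 := by
        apply Finset.sum_eq_zero
        intro i hi
        rw [hb₁i i (Finset.ne_of_mem_erase hi)]
        simp
      rw [h3, h4, hb₁j]
      rcases hscase with ⟨h, hs1⟩ | ⟨h, hs1⟩ <;> simp [hs1]
    refine ⟨b₁, hsum, fun i => ?_, hdiff⟩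
    by_cases hij : i = j
    · subst hij
      have := hx i
      have := hxb i
      rw [hb₁j]
      rcases hscase with ⟨h, hs1⟩ | ⟨h, hs1⟩ <;> omega
    · rw [hb₁i i hij]; exact hxb i

/-- L¹-balls are shift included w.r.t. a rectangular domain. -/
theorem l1ball_shiftIncl {m : ℕ} (P : Set (Fin m → ℤ)) (hP : IsRect P) (ω : ℕ) :
    shiftInclS P {x : Fin m → ℤ | (∑ i, |x i|) ≤ (ω : ℤ)}
      {x : Fin m → ℤ | (∑ i, |x i|) ≤ (ω : ℤ) + 1} := by
  obtain ⟨a, c, _, rfl⟩ := hP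
  have tri : ∀ (b d : Fin m → ℤ), (∑ i, |d i|) ≤ 1 → (∑ i, |b i|) ≤ (ω : ℤ) →
      (∑ i, |(b + d) i|) ≤ (ω : ℤ) + 1 := by
    intro b d hd hb
    calc ∑ i, |(b + d) i| ≤ ∑ i, (|b i| + |d i|) :=
          Finset.sum_le_sum fun i _ => abs_add_le _ _
      _ = (∑ i, |b i|) + ∑ i, |d i| := Finset.sum_add_distrib
      _ ≤ (ω : ℤ) + 1 := add_le_add hb hd
  refine ⟨fun y hy => by simpa using le_trans hy (by omega), ?_, ?_⟩
  · intro x hx b₂ hb₂ hxb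
    obtain ⟨b₁, h1, h2, h3⟩ := l1ball_aux a c ω x b₂ hx hb₂ (fun i => hxb i)
    refine ⟨b₁, h1, h2, fun b hb => tri b (b₂ - b₁) ?_ hb⟩
    simpa using h3
  · intro x hx b₂ hb₂ hxb
    have hb₂' : (∑ i, |(-b₂ : Fin m → ℤ) i|) ≤ (ω : ℤ) + 1 := by simpa using hb₂
    obtain ⟨b₁, h1, h2, h3⟩ := l1ball_aux a c ω x (-b₂) hx hb₂'
      (fun i => by simpa [sub_eq_add_neg] using hxb i)
    refine ⟨-b₁, by simpa using h1, fun i => by simpa [sub_eq_add_neg] using h2 i,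
      fun b hb => tri b (b₂ - -b₁) ?_ hb⟩
    calc ∑ i, |(b₂ - -b₁) i| = ∑ i, |(-b₂ : Fin m → ℤ) i - b₁ i| := by
          apply Finset.sum_congr rfl
          intro i _
          have h : (-b₂ : Fin m → ℤ) i - b₁ i = -((b₂ - -b₁) i) := by
            simp only [Pi.sub_apply, Pi.neg_apply]; ring
          rw [h, abs_neg]
      _ ≤ 1 := h3
end

section
/- (Decomposition theorem for shift inclusion) Let M be an abelian group and B₁ ⊆ B₂ ⊆ M be structuring elements. Then B₁ ⊆_{S,M} B₂ if and only if there exist finitely many v₁, ..., v_n ∈ M such that B₂ = B₁ ∪ (B₁ + v₁) ∪ ... ∪ (B₁ + v_n). -/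
open scoped NNReal

variable {M : Type*} [AddCommGroup M]

/-- Decomposition theorem for shift inclusion on the whole group. -/
theorem shiftIncl_decomposition [DecidableEq M] (B₁ B₂ : Finset M)
    (h1 : (0 : M) ∈ B₁) (h2 : (0 : M) ∈ B₂) (hsub : B₁ ⊆ B₂) :
    (∀ b₂ ∈ B₂, ∃ b₁ ∈ B₁, ∀ b ∈ B₁, b + (b₂ - b₁) ∈ B₂) ↔
      ∃ V : Finset M, B₂ = B₁ ∪ V.biUnion (fun v => B₁.image (· + v)) := by
  constructor
  · intro h
    choose f hf hincl using h
    refine ⟨B₂.attach.image (fun b => b.1 - f b.1 b.2), ?_⟩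
    apply Finset.Subset.antisymm
    · intro b₂ hb₂
      apply Finset.mem_union_right
      rw [Finset.mem_biUnion]
      refine ⟨b₂ - f b₂ hb₂, ?_, ?_⟩
      · exact Finset.mem_image.2 ⟨⟨b₂, hb₂⟩, Finset.mem_attach _ _, rfl⟩
      · exact Finset.mem_image.2 ⟨f b₂ hb₂, hf _ _, by abel⟩
    · intro x hx
      rcases Finset.mem_union.1 hx with h' | h'
      · exact hsub h'
      · rcases Finset.mem_biUnion.1 h' with ⟨v, hv, hx'⟩
        rcases Finset.mem_image.1 hx' with ⟨b, hb, rfl⟩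
        rcases Finset.mem_image.1 hv with ⟨⟨b₂, hb₂⟩, _, rfl⟩
        exact hincl b₂ hb₂ b hb
  · rintro ⟨V, rfl⟩ b₂ hb₂
    rcases Finset.mem_union.1 hb₂ with h' | h'
    · refine ⟨b₂, h', fun b hb => ?_⟩
      have hbb : b + (b₂ - b₂) = b := by abel
      rw [hbb]
      exact Finset.mem_union_left _ hb
    · rcases Finset.mem_biUnion.1 h' with ⟨v, hv, hx⟩
      rcases Finset.mem_image.1 hx with ⟨b₁, hb₁, rfl⟩
      refine ⟨b₁, hb₁, fun b hb => ?_⟩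
      have hbv : b + (b₁ + v - b₁) = b + v := by abel
      rw [hbv]
      exact Finset.mem_union_right _
        (Finset.mem_biUnion.2 ⟨v, hv, Finset.mem_image.2 ⟨b, hb, rfl⟩⟩)
end

section
/- If B₁ ⊆_{S,P,−} B₂ (negative shift inclusion), then for every image g : P → ℝ≥0, the zero set of the opening via B₁ is contained in the zero set of the opening via B₂: O_{B₁}(g)⁻¹(0) ⊆ O_{B₂}(g)⁻¹(0). -/
open scoped NNReal

variable {M : Type*} [AddCommGroup M]

lemma dil_set_bddAbove (P : Set M) (B : Finset M) (f : M → ℝ≥0) (x : M) :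
    BddAbove {y | ∃ b ∈ B, x - b ∈ P ∧ f (x - b) = y} := by
  apply Set.Finite.bddAbove
  apply Set.Finite.subset (Set.Finite.image (fun b => f (x - b)) B.finite_toSet)
  rintro y ⟨b, hb, -, rfl⟩
  exact ⟨b, hb, rfl⟩

/-- Negative shift inclusion implies the zero sets of openings are nested. -/
theorem opening_zero_mono_of_shiftNeg (P : Set M) (B₁ B₂ : Finset M)
    (h1 : (0 : M) ∈ B₁) (h2 : (0 : M) ∈ B₂) (hsub : B₁ ⊆ B₂)
    (hS : shiftNeg P B₁ B₂) :
    ∀ (g : M → ℝ≥0), ∀ x ∈ P, mOpening P B₁ g x = 0 → mOpening P B₂ g x = 0 := by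
  intro g x hx h0
  have key : ∀ y ∈ {y | ∃ b ∈ B₂, x - b ∈ P ∧ mErosion P B₂ g (x - b) = y}, y = 0 := by
    rintro y ⟨b₂, hb₂, hxb₂, rfl⟩
    obtain ⟨b₁, hb₁, hxb₁, hshift⟩ := hS x hx b₂ hb₂ hxb₂
    have e1mem : mErosion P B₁ g (x - b₁) ∈
        {y | ∃ b ∈ B₁, x - b ∈ P ∧ mErosion P B₁ g (x - b) = y} := ⟨b₁, hb₁, hxb₁, rfl⟩
    have e1le : mErosion P B₁ g (x - b₁) ≤ mOpening P B₁ g x :=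
      le_csSup (dil_set_bddAbove P B₁ _ x) e1mem
    have e10 : mErosion P B₁ g (x - b₁) = 0 := le_antisymm (h0 ▸ e1le) zero_le
    have hle : mErosion P B₂ g (x - b₂) ≤ mErosion P B₁ g (x - b₁) := by
      apply csInf_le_csInf (OrderBot.bddBelow _)
      · refine ⟨g (x - b₁ + 0), 0, h1, by simpa using hxb₁, rfl⟩
      · rintro y ⟨b, hb, hmem, rfl⟩
        refine ⟨b + (b₂ - b₁), hshift b hb, ?_, ?_⟩
        · rw [show x - b₂ + (b + (b₂ - b₁)) = x - b₁ + b by abel]; exact hmem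
        · rw [show x - b₂ + (b + (b₂ - b₁)) = x - b₁ + b by abel]
    exact le_antisymm (e10 ▸ hle) zero_le
  rcases Set.eq_empty_or_nonempty {y | ∃ b ∈ B₂, x - b ∈ P ∧ mErosion P B₂ g (x - b) = y} with he | hne
  · simp [mOpening, mDilation, he]
  · exact le_antisymm (csSup_le hne fun y hy => (key y hy).le) zero_le
end

section
/- If B₁ ⊆_{S,P,+} B₂ (positive shift inclusion), then for every image g : P → ℝ≥0, the zero set of the closing via B₂ is contained in that of the closing via B₁: C_{B₂}(g)⁻¹(0) ⊆ C_{B₁}(g)⁻¹(0). -/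
open scoped NNReal

variable {M : Type*} [AddCommGroup M]

/-- Positive shift inclusion implies the zero sets of closings are reverse-nested. -/
theorem closing_zero_antimono_of_shiftPos (P : Set M) (B₁ B₂ : Finset M)
    (h1 : (0 : M) ∈ B₁) (h2 : (0 : M) ∈ B₂) (hsub : B₁ ⊆ B₂)
    (hS : shiftPos P B₁ B₂) :
    ∀ (g : M → ℝ≥0), ∀ x ∈ P, mClosing P B₂ g x = 0 → mClosing P B₁ g x = 0 := by
  intro g x hx hC2
  set f₂ := mDilation P B₂ g with hf₂
  have hfin : ∀ (B : Finset M) (f : M → ℝ≥0) (z : M),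
      ({y | ∃ b ∈ B, z + b ∈ P ∧ f (z + b) = y} : Set ℝ≥0).Finite := by
    intro B f z
    apply Set.Finite.subset (B.finite_toSet.image (fun b => f (z + b)))
    rintro y ⟨b, hb, _, rfl⟩
    exact ⟨b, hb, rfl⟩
  have hfin' : ∀ (B : Finset M) (f : M → ℝ≥0) (z : M),
      ({y | ∃ b ∈ B, z - b ∈ P ∧ f (z - b) = y} : Set ℝ≥0).Finite := by
    intro B f z
    apply Set.Finite.subset (B.finite_toSet.image (fun b => f (z - b)))
    rintro y ⟨b, hb, _, rfl⟩
    exact ⟨b, hb, rfl⟩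
  -- the closing-by-B₂ value 0 is attained at some b₂
  have hne : ({y | ∃ b ∈ B₂, x + b ∈ P ∧ f₂ (x + b) = y} : Set ℝ≥0).Nonempty :=
    ⟨f₂ (x + 0), 0, h2, by simpa using hx, rfl⟩
  have hmem := hne.csInf_mem (hfin B₂ f₂ x)
  have hC2' : sInf {y | ∃ b ∈ B₂, x + b ∈ P ∧ f₂ (x + b) = y} = 0 := hC2
  rw [hC2'] at hmem
  obtain ⟨b₂, hb₂, hxb₂, hd0⟩ := hmem
  -- dilation by B₂ at x+b₂ is 0, so g vanishes on all reachable points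
  have hgzero : ∀ b ∈ B₂, x + b₂ - b ∈ P → g (x + b₂ - b) = 0 := by
    intro b hb hbp
    have hle : g (x + b₂ - b) ≤ sSup {y | ∃ c ∈ B₂, x + b₂ - c ∈ P ∧ g (x + b₂ - c) = y} :=
      le_csSup ((hfin' B₂ g (x + b₂)).bddAbove) ⟨b, hb, hbp, rfl⟩
    have : sSup {y | ∃ c ∈ B₂, x + b₂ - c ∈ P ∧ g (x + b₂ - c) = y} = 0 := hd0
    rw [this] at hle
    exact le_antisymm hle zero_le
  obtain ⟨b₁, hb₁, hxb₁, hshift⟩ := hS x hx b₂ hb₂ hxb₂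
  -- dilation by B₁ at x+b₁ is 0
  have hd1 : mDilation P B₁ g (x + b₁) = 0 := by
    show sSup {y | ∃ b ∈ B₁, x + b₁ - b ∈ P ∧ g (x + b₁ - b) = y} = 0
    apply le_antisymm _ zero_le
    refine csSup_le ⟨g (x + b₁ - 0), 0, h1, by simpa using hxb₁, rfl⟩ ?_
    rintro y ⟨b, hb, hbp, rfl⟩
    have heq : x + b₁ - b = x + b₂ - (b + (b₂ - b₁)) := by abel
    rw [heq] at hbp ⊢
    exact le_of_eq (hgzero _ (hshift b hb) hbp)
  -- conclude the closing by B₁ is 0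
  apply le_antisymm _ zero_le
  have : mClosing P B₁ g x = sInf {y | ∃ b ∈ B₁, x + b ∈ P ∧ mDilation P B₁ g (x + b) = y} :=
    rfl
  rw [this]
  exact csInf_le (OrderBot.bddBelow _) ⟨b₁, hb₁, hxb₁, hd1⟩
end

section
/- (Order-preserving, strong form) If B₁ ⊆_{S,P,−} B₂, then O_{B₂}(g) ≤ O_{B₁}(g) pointwise for every image g : P → ℝ≥0; and if B₁ ⊆_{S,P,+} B₂, then C_{B₁}(g) ≤ C_{B₂}(g) pointwise for every image g. -/
open scoped NNReal

variable {M : Type*} [AddCommGroup M]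

lemma bddAbove_dilSet (P : Set M) (B : Finset M) (g : M → ℝ≥0) (x : M) :
    BddAbove {y | ∃ b ∈ B, x - b ∈ P ∧ g (x - b) = y} := by
  apply Set.Finite.bddAbove
  apply Set.Finite.subset (Set.Finite.image (fun b => g (x - b)) B.finite_toSet)
  rintro y ⟨b, hb, _, rfl⟩
  exact ⟨b, hb, rfl⟩

/-- Order-preserving property, strong form. -/
theorem order_preserving_strong (P : Set M) (B₁ B₂ : Finset M)
    (h1 : (0 : M) ∈ B₁) (h2 : (0 : M) ∈ B₂) (hsub : B₁ ⊆ B₂) :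
    (shiftNeg P B₁ B₂ →
      ∀ (g : M → ℝ≥0), ∀ x ∈ P, mOpening P B₂ g x ≤ mOpening P B₁ g x) ∧
    (shiftPos P B₁ B₂ →
      ∀ (g : M → ℝ≥0), ∀ x ∈ P, mClosing P B₁ g x ≤ mClosing P B₂ g x) := by
  constructor
  · intro hs g x hx
    simp only [mOpening, mDilation]
    refine csSup_le ⟨_, 0, h2, by simpa using hx, rfl⟩ ?_
    rintro y ⟨b₂, hb₂, hxb₂, rfl⟩
    obtain ⟨b₁, hb₁, hxb₁, hB⟩ := hs x hx b₂ hb₂ hxb₂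
    have key : mErosion P B₂ g (x - b₂) ≤ mErosion P B₁ g (x - b₁) := by
      simp only [mErosion]
      refine le_csInf ⟨_, 0, h1, by simpa using hxb₁, rfl⟩ ?_
      rintro z ⟨b, hb, hbp, rfl⟩
      apply csInf_le (OrderBot.bddBelow _)
      refine ⟨b + (b₂ - b₁), hB b hb, ?_, ?_⟩
      · have : x - b₂ + (b + (b₂ - b₁)) = x - b₁ + b := by abel
        rw [this]; exact hbp
      · have : x - b₂ + (b + (b₂ - b₁)) = x - b₁ + b := by abel
        rw [this]
    exact key.trans (le_csSup (bddAbove_dilSet P B₁ _ x) ⟨b₁, hb₁, hxb₁, rfl⟩)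
  · intro hs g x hx
    simp only [mClosing, mErosion]
    refine le_csInf ⟨_, 0, h2, by simpa using hx, rfl⟩ ?_
    rintro y ⟨b₂, hb₂, hxb₂, rfl⟩
    obtain ⟨b₁, hb₁, hxb₁, hB⟩ := hs x hx b₂ hb₂ hxb₂
    have key : mDilation P B₁ g (x + b₁) ≤ mDilation P B₂ g (x + b₂) := by
      simp only [mDilation]
      refine csSup_le ⟨_, 0, h1, by simpa using hxb₁, rfl⟩ ?_
      rintro z ⟨b, hb, hbp, rfl⟩
      apply le_csSup (bddAbove_dilSet P B₂ g _)
      refine ⟨b + (b₂ - b₁), hB b hb, ?_, ?_⟩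
      · have : x + b₂ - (b + (b₂ - b₁)) = x + b₁ - b := by abel
        rw [this]; exact hbp
      · have : x + b₂ - (b + (b₂ - b₁)) = x + b₁ - b := by abel
        rw [this]
    refine le_trans (csInf_le (OrderBot.bddBelow _) ⟨b₁, hb₁, hxb₁, rfl⟩) key
end

section
/- On the whole group (P = M), the zero-set absorption property characterizes shift inclusion: B₁ ⊆_{S,M} B₂ holds if and only if O_{B₁}(g)⁻¹(0) ⊆ O_{B₂}(g)⁻¹(0) for every image g : M → ℝ≥0. -/
open scoped NNReal

variable {M : Type*} [AddCommGroup M]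

lemma ero_zero_iff (B : Finset M) (hB : (0:M) ∈ B) (g : M → ℝ≥0) (x : M) :
    mErosion (Set.univ : Set M) B g x = 0 ↔ ∃ b ∈ B, g (x + b) = 0 := by
  have hset : {y | ∃ b ∈ B, x + b ∈ (Set.univ : Set M) ∧ g (x + b) = y}
      = (fun b => g (x + b)) '' ↑B := by
    ext y; simp [Set.image]
  rw [mErosion, hset]
  constructor
  · intro h
    have hmem := Set.Nonempty.csInf_mem (⟨g (x+0), 0, hB, rfl⟩ :
      ((fun b => g (x + b)) '' ↑B).Nonempty) (B.finite_toSet.image _)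
    rw [h] at hmem
    obtain ⟨b, hb, hgb⟩ := hmem
    exact ⟨b, hb, hgb⟩
  · rintro ⟨b, hb, hgb⟩
    refine le_antisymm ?_ zero_le
    calc sInf ((fun b => g (x + b)) '' ↑B) ≤ g (x + b) :=
        csInf_le (OrderBot.bddBelow _) ⟨b, hb, rfl⟩
      _ = 0 := hgb

lemma dil_zero_iff (B : Finset M) (hB : (0:M) ∈ B) (f : M → ℝ≥0) (x : M) :
    mDilation (Set.univ : Set M) B f x = 0 ↔ ∀ c ∈ B, f (x - c) = 0 := by
  have hset : {y | ∃ b ∈ B, x - b ∈ (Set.univ : Set M) ∧ f (x - b) = y}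
      = (fun b => f (x - b)) '' ↑B := by
    ext y; simp [Set.image]
  rw [mDilation, hset]
  rw [← le_zero_iff, csSup_le_iff ((B.finite_toSet.image _).bddAbove)
    ⟨f (x - 0), 0, hB, rfl⟩]
  constructor
  · rintro h c hc
    exact le_zero_iff.mp (h _ ⟨c, hc, rfl⟩)
  · rintro h y ⟨c, hc, rfl⟩
    exact le_zero_iff.mpr (h c hc)

lemma opening_zero_iff (B : Finset M) (hB : (0:M) ∈ B) (g : M → ℝ≥0) (x : M) :
    mOpening (Set.univ : Set M) B g x = 0 ↔ ∀ c ∈ B, ∃ c' ∈ B, g (x - c + c') = 0 := by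
  rw [mOpening, dil_zero_iff B hB]
  constructor
  · intro h c hc; exact (ero_zero_iff B hB g (x - c)).mp (h c hc)
  · intro h c hc; exact (ero_zero_iff B hB g (x - c)).mpr (h c hc)


/-- On the whole group, shift inclusion is equivalent to nesting of opening zero sets. -/
theorem shiftIncl_iff_opening_zero_mono (B₁ B₂ : Finset M)
    (h1 : (0 : M) ∈ B₁) (h2 : (0 : M) ∈ B₂) (hsub : B₁ ⊆ B₂) :
    (∀ b₂ ∈ B₂, ∃ b₁ ∈ B₁, ∀ b ∈ B₁, b + (b₂ - b₁) ∈ B₂) ↔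
      ∀ (g : M → ℝ≥0) (x : M),
        mOpening (Set.univ : Set M) B₁ g x = 0 → mOpening (Set.univ : Set M) B₂ g x = 0 := by
  constructor
  · intro hS g x h
    rw [opening_zero_iff B₁ h1] at h
    rw [opening_zero_iff B₂ h2]
    intro b₂ hb₂
    obtain ⟨b₁, hb₁, hall⟩ := hS b₂ hb₂
    obtain ⟨b₁', hb₁', hg⟩ := h b₁ hb₁
    refine ⟨b₁' + (b₂ - b₁), hall b₁' hb₁', ?_⟩
    have : x - b₂ + (b₁' + (b₂ - b₁)) = x - b₁ + b₁' := by abel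
    rw [this]; exact hg
  · intro h b₂ hb₂
    classical
    set g : M → ℝ≥0 := fun y => if y ∈ B₂ then 1 else 0 with hg
    have hgz : ∀ y, g y = 0 ↔ y ∉ B₂ := by
      intro y; simp only [hg]; split <;> simp_all
    by_contra hcon
    push_neg at hcon
    have h2' : mOpening (Set.univ : Set M) B₂ g b₂ ≠ 0 := by
      rw [Ne, opening_zero_iff B₂ h2]
      push_neg
      refine ⟨b₂, hb₂, ?_⟩
      intro c' hc'
      simp only [ne_eq, hgz, not_not]
      simpa using hc'
    have h1' : mOpening (Set.univ : Set M) B₁ g b₂ ≠ 0 := fun hz => h2' (h g b₂ hz)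
    rw [Ne, opening_zero_iff B₁ h1] at h1'
    push_neg at h1'
    obtain ⟨b₁, hb₁, hall⟩ := h1'
    obtain ⟨b, hb, hbmem⟩ := hcon b₁ hb₁
    have := hall b hb
    simp only [ne_eq, hgz, not_not] at this
    apply hbmem
    have heq : b + (b₂ - b₁) = b₂ - b₁ + b := by abel
    rw [heq]; exact this
end
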